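/- Let Θ0 be a compact topological space and k ≥ 1. Let Σ : Θ0 → (real k×k matrices) be continuous with Σ(θ) symmetric positive definite for every θ, let ψ : Θ0 → (real k×k matrices) be continuous with ψ(θ) invertible for every θ, let C be a symmetric positive definite real k×k matrix, let g : Θ0 → ℝ^k be continuous, and let w ∈ ℝ^k. For λ > 0 define ℓ_λ(θ) = det(Λ_λ(θ))^{-1/2} · exp(−(1/2)·u_λ(θ)ᵀ Λ_λ(θ)⁻¹ u_λ(θ)), where u_λ(θ) = (λ/(1+λ))·ψ(θ)⁻¹ g(θ) + (1/(1+λ))·w and Λ_λ(θ) = (λ/(1+λ))·ψ(θ)⁻¹ Σ(θ) (ψ(θ)⁻¹)ᵀ + (1/(1+λ))·C, and define ℓ_∞(θ) = |det ψ(θ)| · (det Σ(θ))^{-1/2} · exp(−(1/2)·g(θ)ᵀ Σ(θ)⁻¹ g(θ)). Then ℓ_λ converges to ℓ_∞ uniformly on Θ0 as λ → ∞. -/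

import Mathlib

open Matrix Filter Topology Uniformity

section AMAux

variable {k : ℕ}

lemma am_psd_smul {M : Matrix (Fin k) (Fin k) ℝ} (hM : M.PosSemidef) {c : ℝ} (hc : 0 ≤ c) :
    (c • M).PosSemidef := by
  refine Matrix.posSemidef_iff_dotProduct_mulVec.2 ⟨?_, fun x => ?_⟩
  · unfold Matrix.IsHermitian
    rw [Matrix.conjTranspose_smul, hM.1.eq, star_trivial]
  · rw [Matrix.smul_mulVec, dotProduct_smul, smul_eq_mul]
    exact mul_nonneg hc (hM.dotProduct_mulVec_nonneg x)

lemma am_pd_smul {M : Matrix (Fin k) (Fin k) ℝ} (hM : M.PosDef) {c : ℝ} (hc : 0 < c) :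
    (c • M).PosDef := by
  refine Matrix.posDef_iff_dotProduct_mulVec.2 ⟨?_, fun x hx => ?_⟩
  · unfold Matrix.IsHermitian
    rw [Matrix.conjTranspose_smul, hM.1.eq, star_trivial]
  · rw [Matrix.smul_mulVec, dotProduct_smul, smul_eq_mul]
    exact mul_pos hc ((Matrix.posDef_iff_dotProduct_mulVec.1 hM).2 hx)

lemma am_pd_conj {S B : Matrix (Fin k) (Fin k) ℝ} (hS : S.PosDef) (hB : IsUnit B.det) :
    (B * S * Bᵀ).PosDef := by
  have hBt : IsUnit (Bᵀ).det := by rwa [Matrix.det_transpose]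
  refine Matrix.posDef_iff_dotProduct_mulVec.2 ⟨?_, fun x hx => ?_⟩
  · have hBH : Bᵀ = Bᴴ := by
      ext i j; simp [Matrix.conjTranspose_apply]
    rw [hBH]
    exact Matrix.isHermitian_mul_mul_conjTranspose B hS.1
  · have hy : Bᵀ *ᵥ x ≠ 0 := by
      intro h
      apply hx
      have h2 := congrArg (fun y => (Bᵀ)⁻¹ *ᵥ y) h
      simpa [Matrix.mulVec_mulVec, Matrix.nonsing_inv_mul _ hBt] using h2
    have key : star x ⬝ᵥ (B * S * Bᵀ) *ᵥ x
        = star (Bᵀ *ᵥ x) ⬝ᵥ S *ᵥ (Bᵀ *ᵥ x) := by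
      rw [star_trivial, star_trivial, ← Matrix.mulVec_mulVec, ← Matrix.mulVec_mulVec,
        Matrix.dotProduct_mulVec, ← Matrix.mulVec_transpose]
    rw [key]
    exact (Matrix.posDef_iff_dotProduct_mulVec.1 hS).2 hy

lemma am_quad {S P : Matrix (Fin k) (Fin k) ℝ} (hS : IsUnit S.det) (hP : IsUnit P.det)
    (g : Fin k → ℝ) :
    (P⁻¹ *ᵥ g) ⬝ᵥ (P⁻¹ * S * (P⁻¹)ᵀ)⁻¹ *ᵥ (P⁻¹ *ᵥ g) = g ⬝ᵥ S⁻¹ *ᵥ g := by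
  have hPt : IsUnit (Pᵀ).det := by rwa [Matrix.det_transpose]
  have h1 : (P⁻¹ * S * (P⁻¹)ᵀ)⁻¹ = Pᵀ * S⁻¹ * P := by
    rw [Matrix.mul_inv_rev, Matrix.mul_inv_rev, Matrix.transpose_nonsing_inv,
      Matrix.nonsing_inv_nonsing_inv _ hPt, Matrix.nonsing_inv_nonsing_inv _ hP,
      ← Matrix.mul_assoc]
  rw [h1]
  have h2 : (Pᵀ * S⁻¹ * P) *ᵥ (P⁻¹ *ᵥ g) = (Pᵀ * S⁻¹) *ᵥ g := by
    rw [Matrix.mulVec_mulVec, Matrix.mul_assoc (Pᵀ * S⁻¹), Matrix.mul_nonsing_inv _ hP,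
      Matrix.mul_one]
  rw [h2, ← Matrix.mulVec_mulVec, Matrix.dotProduct_mulVec, Matrix.vecMul_transpose,
    Matrix.mulVec_mulVec, Matrix.mul_nonsing_inv _ hP, Matrix.one_mulVec]

end AMAux

lemma am_key {Θ0 : Type*} [TopologicalSpace Θ0] [CompactSpace Θ0] (F : ℝ × Θ0 → ℝ)
    (hFc : Continuous F) :
    TendstoUniformly (fun t θ => F (t, θ)) (fun θ => F (0, θ)) (𝓝 (0 : ℝ)) := by
  intro U hU
  have hU2 : Prod.swap ⁻¹' U ∈ 𝓤 ℝ := tendsto_swap_uniformity hU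
  obtain ⟨vv, hvv, h⟩ := IsCompact.mem_uniformity_of_prod (α := ℝ) (β := Θ0)
    (f := fun t θ => F (t, θ)) (s := Set.univ) (k := Set.univ) (q := 0)
    isCompact_univ
    ((hFc.comp (continuous_fst.prodMk continuous_snd)).continuousOn)
    (Set.mem_univ 0) hU2
  rw [nhdsWithin_univ] at hvv
  filter_upwards [hvv] with t ht θ
  exact h t ht θ (Set.mem_univ θ)



set_option maxHeartbeats 1000000 in
/-- Uniform-convergence step in the proof of the limit-of-Bayes theorem (Appendix C of
Andrews–Mikusheva): on a compact set `Θ0`, with continuous `Σ`, `ψ`, `g`, the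
proportional-prior integrated likelihoods `ℓ_λ` converge uniformly, as `λ → ∞`, to the
quasi-likelihood `ℓ_∞`. -/
theorem stmt_6 {Θ0 : Type*} [TopologicalSpace Θ0] [CompactSpace Θ0]
    (k : ℕ) (hk : 1 ≤ k)
    (Sg : Θ0 → Matrix (Fin k) (Fin k) ℝ) (hSgc : Continuous Sg)
    (hSgPD : ∀ θ, (Sg θ).PosDef)
    (ψ : Θ0 → Matrix (Fin k) (Fin k) ℝ) (hψc : Continuous ψ)
    (hψinv : ∀ θ, IsUnit (ψ θ).det)
    (C : Matrix (Fin k) (Fin k) ℝ) (hC : C.PosDef)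
    (g : Θ0 → Fin k → ℝ) (hgc : Continuous g) (w : Fin k → ℝ)
    (u : ℝ → Θ0 → Fin k → ℝ) (Λ : ℝ → Θ0 → Matrix (Fin k) (Fin k) ℝ)
    (hu : ∀ l θ, u l θ = (l / (1 + l)) • (ψ θ)⁻¹.mulVec (g θ) + (1 / (1 + l)) • w)
    (hΛ : ∀ l θ, Λ l θ = (l / (1 + l)) • ((ψ θ)⁻¹ * Sg θ * ((ψ θ)⁻¹)ᵀ) + (1 / (1 + l)) • C) :
    TendstoUniformly
      (fun (l : ℝ) (θ : Θ0) =>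
        (Λ l θ).det ^ (-(1 / 2) : ℝ) *
          Real.exp (-(1 / 2) * (u l θ ⬝ᵥ (Λ l θ)⁻¹.mulVec (u l θ))))
      (fun θ : Θ0 =>
        |(ψ θ).det| * (Sg θ).det ^ (-(1 / 2) : ℝ) *
          Real.exp (-(1 / 2) * (g θ ⬝ᵥ (Sg θ)⁻¹.mulVec (g θ))))
      atTop := by
  classical
  -- clamp function
  let c : ℝ → ℝ := fun t => max 0 (min t 1)
  have hc_cont : Continuous c := continuous_const.max (continuous_id.min continuous_const)
  have hc_mem : ∀ t, 0 ≤ c t ∧ c t ≤ 1 := fun t =>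
    ⟨le_max_left _ _, max_le (by norm_num) (min_le_right _ _)⟩
  have hc_eq : ∀ t, 0 ≤ t → t ≤ 1 → c t = t := fun t h0 h1 => by
    show max 0 (min t 1) = t
    rw [min_eq_left h1, max_eq_right h0]
  have hc0 : c 0 = 0 := hc_eq 0 le_rfl zero_le_one
  -- the matrices
  let A : Θ0 → Matrix (Fin k) (Fin k) ℝ := fun θ => (ψ θ)⁻¹ * Sg θ * ((ψ θ)⁻¹)ᵀ
  have hψd : ∀ θ, (ψ θ).det ≠ 0 := fun θ => (hψinv θ).ne_zero
  have hψinvdet : ∀ θ, IsUnit ((ψ θ)⁻¹).det := fun θ =>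
    Matrix.isUnit_nonsing_inv_det _ (hψinv θ)
  have hApd : ∀ θ, (A θ).PosDef := fun θ => am_pd_conj (hSgPD θ) (hψinvdet θ)
  let M : ℝ × Θ0 → Matrix (Fin k) (Fin k) ℝ :=
    fun p => (1 - c p.1) • A p.2 + c p.1 • C
  let v : ℝ × Θ0 → Fin k → ℝ :=
    fun p => (1 - c p.1) • ((ψ p.2)⁻¹ *ᵥ g p.2) + c p.1 • w
  have hMpd : ∀ p, (M p).PosDef := by
    intro p
    rcases eq_or_lt_of_le (hc_mem p.1).1 with h0 | h0
    · have hcp : c p.1 = 0 := h0.symm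
      show ((1 - c p.1) • A p.2 + c p.1 • C).PosDef
      rw [hcp]
      simpa using hApd p.2
    · exact Matrix.PosDef.posSemidef_add
        (am_psd_smul (hApd p.2).posSemidef (by linarith [(hc_mem p.1).2]))
        (am_pd_smul hC h0)
  have hMdet : ∀ p, 0 < (M p).det := fun p => (hMpd p).det_pos
  -- continuity of inverse of ψ
  have hψic : Continuous fun θ => (ψ θ)⁻¹ := by
    have h : (fun θ => (ψ θ)⁻¹) = fun θ => ((ψ θ).det)⁻¹ • (ψ θ).adjugate := by
      funext θ
      rw [Matrix.inv_def, Ring.inverse_eq_inv]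
    rw [h]
    exact ((hψc.matrix_det).inv₀ hψd).smul hψc.matrix_adjugate
  have hAc : Continuous A := (hψic.matrix_mul hSgc).matrix_mul hψic.matrix_transpose
  have hMc : Continuous M := by
    apply Continuous.add
    · exact (continuous_const.sub (hc_cont.comp continuous_fst)).smul
        (hAc.comp continuous_snd)
    · exact (hc_cont.comp continuous_fst).smul continuous_const
  have hvc : Continuous v := by
    apply Continuous.add
    · exact (continuous_const.sub (hc_cont.comp continuous_fst)).smul
        ((hψic.comp continuous_snd).matrix_mulVec (hgc.comp continuous_snd))
    · exact (hc_cont.comp continuous_fst).smul continuous_const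
  have hMic : Continuous fun p => (M p)⁻¹ := by
    have h : (fun p => (M p)⁻¹) = fun p => ((M p).det)⁻¹ • (M p).adjugate := by
      funext p
      rw [Matrix.inv_def, Ring.inverse_eq_inv]
    rw [h]
    exact ((hMc.matrix_det).inv₀ fun p => (hMdet p).ne').smul hMc.matrix_adjugate
  -- the continuous family
  let F : ℝ × Θ0 → ℝ :=
    fun p => (M p).det ^ (-(1 / 2) : ℝ) *
      Real.exp (-(1 / 2) * (v p ⬝ᵥ (M p)⁻¹ *ᵥ v p))
  have hFc : Continuous F := by
    apply Continuous.mul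
    · refine continuous_iff_continuousAt.2 fun p => ?_
      exact (hMc.matrix_det.continuousAt).rpow_const (Or.inl (hMdet p).ne')
    · exact Real.continuous_exp.comp
        (continuous_const.mul (hvc.dotProduct (hMic.matrix_mulVec hvc)))
  -- uniform convergence of the family as t → 0
  have key : TendstoUniformly (fun t θ => F (t, θ)) (fun θ => F (0, θ)) (𝓝 (0 : ℝ)) :=
    am_key F hFc
  -- the reparametrization
  let s : ℝ → ℝ := fun l => 1 / (1 + l)
  have hs : Tendsto s atTop (𝓝 0) := by
    have h1 : Tendsto (fun l : ℝ => 1 + l) atTop atTop :=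
      tendsto_atTop_add_const_left _ 1 tendsto_id
    simpa [s, one_div, Function.comp_def] using tendsto_inv_atTop_zero.comp h1
  have key2 : TendstoUniformly (fun l θ => F (s l, θ)) (fun θ => F (0, θ)) atTop :=
    fun U hU => hs.eventually (key U hU)
  -- identify the limit function
  have hlim : (fun θ : Θ0 => F (0, θ)) =
      fun θ : Θ0 =>
        |(ψ θ).det| * (Sg θ).det ^ (-(1 / 2) : ℝ) *
          Real.exp (-(1 / 2) * (g θ ⬝ᵥ (Sg θ)⁻¹.mulVec (g θ))) := by
    funext θ
    have hM0 : M (0, θ) = A θ := by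
      show (1 - c 0) • A θ + c 0 • C = A θ
      rw [hc0]; simp
    have hv0 : v (0, θ) = (ψ θ)⁻¹ *ᵥ g θ := by
      show (1 - c 0) • ((ψ θ)⁻¹ *ᵥ g θ) + c 0 • w = _
      rw [hc0]; simp
    have hSgu : IsUnit (Sg θ).det := isUnit_iff_ne_zero.2 (hSgPD θ).det_pos.ne'
    have hdetA : (A θ).det = ((ψ θ).det)⁻¹ ^ 2 * (Sg θ).det := by
      have hdi : ((ψ θ)⁻¹).det = ((ψ θ).det)⁻¹ := by
        rw [Matrix.det_nonsing_inv, Ring.inverse_eq_inv]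
      show ((ψ θ)⁻¹ * Sg θ * ((ψ θ)⁻¹)ᵀ).det = _
      rw [Matrix.det_mul, Matrix.det_mul, Matrix.det_transpose, hdi]
      ring
    have hquad : v (0, θ) ⬝ᵥ (M (0, θ))⁻¹ *ᵥ v (0, θ) = g θ ⬝ᵥ (Sg θ)⁻¹ *ᵥ g θ := by
      rw [hv0, hM0]
      exact am_quad hSgu (hψinv θ) (g θ)
    have hrpow : (A θ).det ^ (-(1 / 2) : ℝ)
        = |(ψ θ).det| * (Sg θ).det ^ (-(1 / 2) : ℝ) := by
      rw [hdetA, Real.mul_rpow (sq_nonneg _) (hSgPD θ).det_pos.le]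
      congr 1
      have habs : ((ψ θ).det)⁻¹ ^ 2 = |((ψ θ).det)⁻¹| ^ 2 := (sq_abs _).symm
      rw [habs, ← Real.rpow_natCast |((ψ θ).det)⁻¹| 2, ← Real.rpow_mul (abs_nonneg _)]
      norm_num
      rw [Real.rpow_neg_one, inv_inv]
    show (M (0, θ)).det ^ (-(1 / 2) : ℝ) *
        Real.exp (-(1 / 2) * (v (0, θ) ⬝ᵥ (M (0, θ))⁻¹ *ᵥ v (0, θ))) = _
    rw [hquad, hM0, hrpow]
  rw [← hlim]
  refine (tendstoUniformly_congr ?_).mp key2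
  filter_upwards [eventually_ge_atTop (1 : ℝ)] with l hl
  funext θ
  have h1 : (0 : ℝ) < 1 + l := by linarith
  have hs0 : (0 : ℝ) ≤ s l := by positivity
  have hs1 : s l ≤ 1 := by
    show 1 / (1 + l) ≤ 1
    rw [div_le_one h1]; linarith
  have hcl : c (s l) = 1 / (1 + l) := hc_eq _ hs0 hs1
  have h2 : 1 - 1 / (1 + l) = l / (1 + l) := by field_simp; ring
  have hM : M (s l, θ) = Λ l θ := by
    show (1 - c (s l)) • A θ + c (s l) • C = Λ l θ
    rw [hcl, h2, hΛ l θ]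
  have hv : v (s l, θ) = u l θ := by
    show (1 - c (s l)) • ((ψ θ)⁻¹ *ᵥ g θ) + c (s l) • w = u l θ
    rw [hcl, h2, hu l θ]
  show (M (s l, θ)).det ^ (-(1 / 2) : ℝ) *
      Real.exp (-(1 / 2) * (v (s l, θ) ⬝ᵥ (M (s l, θ))⁻¹ *ᵥ v (s l, θ))) = _
  rw [hM, hv]
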